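/- A 2×2 Hermitian quaternionic matrix S = [[s, b],[b*, s′]] with s, s′ ∈ ℝ and b ≠ 0 has non-real left eigenvalues if and only if Re(b) = 0 and s = s′; in that case the left eigenvalues are exactly the quaternions λ = s + bω with Re(ω) = 0 and |ω| = 1. -/

import Mathlib

open Quaternion Matrix

lemma not_isUnit_2x2 (p q c b : ℍ[ℝ]) (hb : b ≠ 0) :
    ¬ IsUnit !![p, b; c, q] ↔ c = q * b⁻¹ * p := by
  constructor
  · intro h
    by_contra hne
    apply h
    have hd : c = q * b⁻¹ * p + (c - q * b⁻¹ * p) := by abel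
    set d := c - q * b⁻¹ * p with hdd
    have hdne : d ≠ 0 := sub_ne_zero.mpr hne
    have hbi' : ∀ x : ℍ[ℝ], b * (b⁻¹ * x) = x := fun x => by
      rw [← mul_assoc, mul_inv_cancel₀ hb, one_mul]
    have hib' : ∀ x : ℍ[ℝ], b⁻¹ * (b * x) = x := fun x => by
      rw [← mul_assoc, inv_mul_cancel₀ hb, one_mul]
    have hdi' : ∀ x : ℍ[ℝ], d * (d⁻¹ * x) = x := fun x => by
      rw [← mul_assoc, mul_inv_cancel₀ hdne, one_mul]
    have hid' : ∀ x : ℍ[ℝ], d⁻¹ * (d * x) = x := fun x => by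
      rw [← mul_assoc, inv_mul_cancel₀ hdne, one_mul]
    have hbi : b * b⁻¹ = 1 := mul_inv_cancel₀ hb
    have hib : b⁻¹ * b = 1 := inv_mul_cancel₀ hb
    have hdi : d * d⁻¹ = 1 := mul_inv_cancel₀ hdne
    have hid : d⁻¹ * d = 1 := inv_mul_cancel₀ hdne
    refine isUnit_iff_exists.mpr
      ⟨!![-(d⁻¹*q*b⁻¹), d⁻¹; b⁻¹ + b⁻¹*p*d⁻¹*q*b⁻¹, -(b⁻¹*p*d⁻¹)], ?_, ?_⟩ <;>
    · refine Matrix.ext fun i j => ?_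
      fin_cases i <;> fin_cases j <;>
        simp [Matrix.mul_apply, Fin.sum_univ_two, Matrix.one_apply, hd, mul_assoc, mul_add,
          add_mul, neg_mul, mul_neg, hbi', hib', hdi', hid', hbi, hib, hdi, hid] <;>
        abel
  · rintro rfl
    intro hU
    obtain ⟨⟨M, N, hMN, hNM⟩, hu⟩ := hU
    have hu' : M = !![p, b; q * b⁻¹ * p, q] := hu
    rw [hu'] at hNM
    have hv : !![p, b; q * b⁻¹ * p, q] *ᵥ ![1, -(b⁻¹ * p)] = 0 := by
      funext i
      fin_cases i <;>
        simp [Matrix.mulVec, dotProduct, Fin.sum_univ_two, mul_assoc,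
          ← mul_assoc b b⁻¹ p, mul_inv_cancel₀ hb]
    have h0 : (![1, -(b⁻¹ * p)] : Fin 2 → ℍ[ℝ]) = 0 := by
      calc ![1, -(b⁻¹ * p)]
          = (N * !![p, b; q * b⁻¹ * p, q]) *ᵥ ![1, -(b⁻¹ * p)] := by
            rw [hNM, Matrix.one_mulVec]
        _ = N *ᵥ (!![p, b; q * b⁻¹ * p, q] *ᵥ ![1, -(b⁻¹ * p)]) :=
            (Matrix.mulVec_mulVec _ _ _).symm
        _ = 0 := by rw [hv, Matrix.mulVec_zero]
    have := congrFun h0 0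
    simp at this


lemma quat_re_mul_comm (a b : ℍ[ℝ]) : (a * b).re = (b * a).re := by
  simp [Quaternion.re_mul]; ring

lemma quat_sq_eq_neg_one_iff (ω : ℍ[ℝ]) : ω * ω = -1 ↔ ω.re = 0 ∧ ‖ω‖ = 1 := by
  constructor
  · intro h
    have hre := congrArg QuaternionAlgebra.re h
    have hi := congrArg QuaternionAlgebra.imI h
    have hj := congrArg QuaternionAlgebra.imJ h
    have hk := congrArg QuaternionAlgebra.imK h
    simp [Quaternion.re_mul, Quaternion.imI_mul, Quaternion.imJ_mul, Quaternion.imK_mul]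
      at hre hi hj hk
    have hre0 : ω.re = 0 := by
      by_contra h0
      have hi0 : ω.imI = 0 := by
        have h2 : ω.re * ω.imI = 0 := by linarith
        exact (mul_eq_zero.mp h2).resolve_left h0
      have hj0 : ω.imJ = 0 := by
        have h2 : ω.re * ω.imJ = 0 := by linarith
        exact (mul_eq_zero.mp h2).resolve_left h0
      have hk0 : ω.imK = 0 := by
        have h2 : ω.re * ω.imK = 0 := by linarith
        exact (mul_eq_zero.mp h2).resolve_left h0
      rw [hi0, hj0, hk0] at hre
      nlinarith
    refine ⟨hre0, ?_⟩
    have hn : normSq ω = 1 := by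
      rw [Quaternion.normSq_def']
      nlinarith
    have := Quaternion.normSq_eq_norm_mul_self ω
    nlinarith [norm_nonneg ω]
  · rintro ⟨h0, h1⟩
    have hn : normSq ω = 1 := by
      rw [Quaternion.normSq_eq_norm_mul_self, h1]; norm_num
    rw [Quaternion.normSq_def'] at hn
    ext <;>
      simp [Quaternion.re_mul, Quaternion.imI_mul, Quaternion.imJ_mul, Quaternion.imK_mul, h0] <;>
      nlinarith

lemma quat_anticomm_re_zero (c w : ℍ[ℝ]) (hw0 : w.re = 0) (hw : w ≠ 0)
    (h : c * w = -(w * c)) : c.re = 0 := by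
  have hi := congrArg QuaternionAlgebra.imI h
  have hj := congrArg QuaternionAlgebra.imJ h
  have hk := congrArg QuaternionAlgebra.imK h
  simp [Quaternion.imI_mul, Quaternion.imJ_mul, Quaternion.imK_mul, hw0] at hi hj hk
  by_contra h0
  apply hw
  have hi0 : w.imI = 0 := by
    have h2 : c.re * w.imI = 0 := by linarith
    exact (mul_eq_zero.mp h2).resolve_left h0
  have hj0 : w.imJ = 0 := by
    have h2 : c.re * w.imJ = 0 := by linarith
    exact (mul_eq_zero.mp h2).resolve_left h0
  have hk0 : w.imK = 0 := by
    have h2 : c.re * w.imK = 0 := by linarith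
    exact (mul_eq_zero.mp h2).resolve_left h0
  ext <;> simp [hw0, hi0, hj0, hk0]

lemma quat_star_eq_neg (b : ℍ[ℝ]) (h : b.re = 0) : star b = -b := by
  ext <;> simp [h]


lemma keyA (s s' : ℝ) (b : ℍ[ℝ]) (hb : b ≠ 0) (lam : ℍ[ℝ]) (hnr : lam ≠ (lam.re : ℍ[ℝ]))
    (hcond : star b = ((s' : ℍ[ℝ]) - lam) * b⁻¹ * ((s : ℍ[ℝ]) - lam)) :
    b.re = 0 ∧ s = s' := by
  set t : ℝ := lam.re with ht
  set c : ℍ[ℝ] := star b with hcdef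
  set p : ℍ[ℝ] := (s : ℍ[ℝ]) - lam with hpdef
  set q : ℍ[ℝ] := (s' : ℍ[ℝ]) - lam with hqdef
  set w : ℍ[ℝ] := lam - (t : ℍ[ℝ]) with hwdef
  set N : ℝ := normSq b with hNdef
  set P : ℝ := normSq p with hPdef
  have hc : c ≠ 0 := star_ne_zero.mpr hb
  have hw : w ≠ 0 := sub_ne_zero.mpr hnr
  have hw0 : w.re = 0 := by simp [hwdef, ht]
  have hN : N ≠ 0 := normSq_ne_zero.mpr hb
  have hNpos : 0 < N := lt_of_le_of_ne (normSq_nonneg) (Ne.symm hN)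
  have hp : p ≠ 0 := by
    intro h0
    apply hnr
    have h5 : lam = (s : ℍ[ℝ]) := by rwa [hpdef, sub_eq_zero, eq_comm] at h0
    have h6 : t = s := by rw [ht, h5, Quaternion.re_coe]
    rw [h5, h6]
  have hP : P ≠ 0 := normSq_ne_zero.mpr hp
  have hPpos : 0 < P := lt_of_le_of_ne (normSq_nonneg) (Ne.symm hP)
  -- E : N • c = q * c * p
  have hE : N • c = q * c * p := by
    conv_lhs => rw [hcond]
    rw [Quaternion.inv_def]
    simp only [← hcdef, ← hqdef, ← hpdef, ← hNdef]
    simp [smul_mul_assoc, mul_smul_comm, smul_smul, mul_inv_cancel₀ hN]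
  have hE2 : N • (c * star p) = P • (q * c) := by
    have h := congrArg (· * star p) hE
    simp only [smul_mul_assoc, mul_assoc] at h
    rw [Quaternion.self_mul_star, Quaternion.mul_coe_eq_smul, ← hPdef] at h
    rw [h, mul_smul_comm]
  have hF : N • (c * star p * c⁻¹) = P • (q * c * c⁻¹) := by
    have h := congrArg (· * c⁻¹) hE2
    simpa [smul_mul_assoc, mul_assoc] using h
  rw [mul_assoc q c c⁻¹, mul_inv_cancel₀ hc, mul_one] at hF
  have h1 : star p = ((s - t : ℝ) : ℍ[ℝ]) + w := by
    ext <;> simp [hpdef, hwdef] <;> ring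
  have hq1 : q = ((s' - t : ℝ) : ℍ[ℝ]) - w := by
    ext <;> simp [hqdef, hwdef] <;> ring
  have h2 : c * star p * c⁻¹ = ((s - t : ℝ) : ℍ[ℝ]) + c * w * c⁻¹ := by
    rw [h1, mul_add, add_mul, Quaternion.mul_coe_eq_smul, smul_mul_assoc,
      mul_inv_cancel₀ hc]
    simp [Quaternion.coe_mul_eq_smul]
    rw [← Quaternion.coe_one, Quaternion.smul_coe]
    push_cast
    rw [mul_one]
  rw [h2, hq1] at hF
  have hconjre : (c * w * c⁻¹).re = 0 := by
    rw [quat_re_mul_comm, ← mul_assoc, inv_mul_cancel₀ hc, one_mul, hw0]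
  -- T1
  have hT1 : N * (s - t) = P * (s' - t) := by
    have h := congrArg QuaternionAlgebra.re hF
    simpa [Quaternion.re_smul, hconjre, hw0] using h
  -- T2
  have hT2 : N • (c * w * c⁻¹) = -(P • w) := by
    rw [smul_add, smul_sub, Quaternion.smul_coe, hT1, ← Quaternion.smul_coe,
      sub_eq_add_neg] at hF
    exact add_left_cancel hF
  -- norms
  have hNP : N = P := by
    have h := congrArg norm hT2
    rw [norm_smul, norm_neg, norm_smul, norm_mul, norm_mul, norm_inv] at h
    have hcn : ‖c‖ ≠ 0 := norm_ne_zero_iff.mpr hc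
    field_simp [hcn] at h
    rwa [Real.norm_eq_abs, Real.norm_eq_abs, abs_of_pos hNpos, abs_of_pos hPpos] at h
  have hss' : s = s' := by
    rw [← hNP] at hT1
    have := mul_left_cancel₀ hN hT1
    linarith
  -- anticommute
  have hcw : c * w = -(w * c) := by
    rw [← hNP] at hT2
    have h3 : c * w * c⁻¹ = -w := by
      apply smul_right_injective ℍ[ℝ] hN
      show N • (c * w * c⁻¹) = N • (-w)
      rw [hT2, smul_neg]
    have h4 := congrArg (· * c) h3
    simpa [mul_assoc, inv_mul_cancel₀ hc, neg_mul] using h4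
  have hcre := quat_anticomm_re_zero c w hw0 hw hcw
  rw [hcdef, Quaternion.re_star] at hcre
  exact ⟨hcre, hss'⟩


lemma quat_norm_one_of_normSq_one (x : ℍ[ℝ]) (h : normSq x = 1) : ‖x‖ = 1 := by
  have h2 := Quaternion.normSq_eq_norm_mul_self x
  nlinarith [norm_nonneg x]

lemma quat_ne_re_of_im (x : ℍ[ℝ]) (h : x.imI ≠ 0 ∨ x.imJ ≠ 0 ∨ x.imK ≠ 0) :
    x ≠ (x.re : ℍ[ℝ]) := by
  intro he
  rcases h with h | h | h
  · exact h (by rw [he]; simp)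
  · exact h (by rw [he]; simp)
  · exact h (by rw [he]; simp)

lemma keyC (s : ℝ) (b : ℍ[ℝ]) (hb : b ≠ 0) (hbre : b.re = 0)
    (ω : ℍ[ℝ]) (h0 : ω.re = 0) (h1 : ‖ω‖ = 1) :
    star b = ((s : ℍ[ℝ]) - ((s : ℍ[ℝ]) + b * ω)) * b⁻¹ *
      ((s : ℍ[ℝ]) - ((s : ℍ[ℝ]) + b * ω)) := by
  have hω : ω * ω = -1 := (quat_sq_eq_neg_one_iff ω).mpr ⟨h0, h1⟩
  have h2 : (s : ℍ[ℝ]) - ((s : ℍ[ℝ]) + b * ω) = -(b * ω) := by abel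
  rw [h2, quat_star_eq_neg b hbre, neg_mul, neg_mul, mul_neg, neg_neg]
  rw [mul_assoc (b * ω) b⁻¹ (b * ω), mul_assoc b ω _, ← mul_assoc b⁻¹ b ω,
    inv_mul_cancel₀ hb, one_mul, ← mul_assoc, mul_assoc b ω ω, hω]
  simp

lemma keyB (s : ℝ) (b lam : ℍ[ℝ]) (hb : b ≠ 0) (hbre : b.re = 0)
    (hcond : star b = ((s : ℍ[ℝ]) - lam) * b⁻¹ * ((s : ℍ[ℝ]) - lam)) :
    ∃ ω : ℍ[ℝ], ω.re = 0 ∧ ‖ω‖ = 1 ∧ lam = (s : ℍ[ℝ]) + b * ω := by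
  have h2 : (s : ℍ[ℝ]) - lam = -(lam - (s : ℍ[ℝ])) := by abel
  rw [h2, neg_mul, neg_mul, mul_neg, neg_neg, quat_star_eq_neg b hbre] at hcond
  -- hcond : -b = (lam - s) * b⁻¹ * (lam - s)
  set ω : ℍ[ℝ] := b⁻¹ * (lam - (s : ℍ[ℝ])) with hω
  have hsq : ω * ω = -1 := by
    rw [hω]
    calc b⁻¹ * (lam - (s:ℍ[ℝ])) * (b⁻¹ * (lam - (s:ℍ[ℝ])))
        = b⁻¹ * ((lam - (s:ℍ[ℝ])) * b⁻¹ * (lam - (s:ℍ[ℝ]))) := by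
          rw [mul_assoc, mul_assoc]
      _ = b⁻¹ * (-b) := by rw [← hcond]
      _ = -1 := by rw [mul_neg, inv_mul_cancel₀ hb]
  obtain ⟨hre, hn⟩ := (quat_sq_eq_neg_one_iff ω).mp hsq
  refine ⟨ω, hre, hn, ?_⟩
  rw [hω, ← mul_assoc, mul_inv_cancel₀ hb, one_mul]
  abel

theorem hermitian_2x2_nonreal_left_eigenvalues
    (s s' : ℝ) (b : ℍ[ℝ]) (hb : b ≠ 0)
    (S : Matrix (Fin 2) (Fin 2) ℍ[ℝ])
    (hS : S = !![(s : ℍ[ℝ]), b; star b, (s' : ℍ[ℝ])]) :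
    ((∃ lam : ℍ[ℝ], ¬ IsUnit (S - lam • (1 : Matrix (Fin 2) (Fin 2) ℍ[ℝ])) ∧
        lam ≠ (lam.re : ℍ[ℝ])) ↔ (b.re = 0 ∧ s = s')) ∧
    ((b.re = 0 ∧ s = s') →
      ∀ lam : ℍ[ℝ], ¬ IsUnit (S - lam • (1 : Matrix (Fin 2) (Fin 2) ℍ[ℝ])) ↔
        ∃ ω : ℍ[ℝ], ω.re = 0 ∧ ‖ω‖ = 1 ∧ lam = (s : ℍ[ℝ]) + b * ω) := by
  have hM : ∀ lam : ℍ[ℝ], S - lam • (1 : Matrix (Fin 2) (Fin 2) ℍ[ℝ]) =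
      !![(s : ℍ[ℝ]) - lam, b; star b, (s' : ℍ[ℝ]) - lam] := by
    intro lam
    subst hS
    refine Matrix.ext fun i j => ?_
    fin_cases i <;> fin_cases j <;>
      simp [Matrix.one_apply, Matrix.sub_apply, Matrix.smul_apply, smul_eq_mul]
  have hcrit : ∀ lam : ℍ[ℝ], ¬ IsUnit (S - lam • (1 : Matrix (Fin 2) (Fin 2) ℍ[ℝ])) ↔
      star b = ((s' : ℍ[ℝ]) - lam) * b⁻¹ * ((s : ℍ[ℝ]) - lam) := fun lam => by
    rw [hM lam]; exact not_isUnit_2x2 _ _ _ _ hb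
  constructor
  · constructor
    · rintro ⟨lam, hsing, hnr⟩
      exact keyA s s' b hb lam hnr ((hcrit lam).mp hsing)
    · rintro ⟨hbre, hss⟩
      by_cases hJK : b.imJ = 0 ∧ b.imK = 0
      · have hI : b.imI ≠ 0 := by
          intro h0
          exact hb (by ext <;> simp [hbre, hJK.1, hJK.2, h0])
        set ω : ℍ[ℝ] := ⟨0, 0, 1, 0⟩ with hωd
        have hre : ω.re = 0 := rfl
        have hn : ‖ω‖ = 1 := by
          apply quat_norm_one_of_normSq_one
          rw [Quaternion.normSq_def']
          norm_num [hωd]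
        refine ⟨(s : ℍ[ℝ]) + b * ω, ?_, ?_⟩
        · rw [hcrit]
          rw [← hss]
          exact keyC s b hb hbre ω hre hn
        · apply quat_ne_re_of_im
          right; right
          erw [QuaternionAlgebra.imK_add, Quaternion.imK_mul]; simp [hωd, hbre, hI]
      · set ω : ℍ[ℝ] := ⟨0, 1, 0, 0⟩ with hωd
        have hre : ω.re = 0 := rfl
        have hn : ‖ω‖ = 1 := by
          apply quat_norm_one_of_normSq_one
          rw [Quaternion.normSq_def']
          norm_num [hωd]
        refine ⟨(s : ℍ[ℝ]) + b * ω, ?_, ?_⟩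
        · rw [hcrit]
          rw [← hss]
          exact keyC s b hb hbre ω hre hn
        · apply quat_ne_re_of_im
          rw [not_and_or] at hJK
          rcases hJK with h | h
          · right; right
            erw [QuaternionAlgebra.imK_add, Quaternion.imK_mul]; simp [hωd, h]
          · right; left
            erw [QuaternionAlgebra.imJ_add, Quaternion.imJ_mul]; simp [hωd, h]
  · rintro ⟨hbre, hss⟩ lam
    rw [hcrit, ← hss]
    constructor
    · exact fun h => keyB s b lam hb hbre h
    · rintro ⟨ω, h0, h1, rfl⟩
      exact keyC s b hb hbre ω h0 h1
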